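/- For each n ≥ 1 and all real x, the n-th derivative of arctan at x equals (-1)^{n-1} · n! · p_{n-1}(x) / (1+x²)^n. -/

import Mathlib

open Finset Polynomial Real

noncomputable def p (n : ℕ) (x : ℝ) : ℝ :=
  ∑ k ∈ (Finset.range (n+1)).filter (fun k => Even k),
    (n.choose k : ℝ) * (-1 : ℝ)^(k/2) / (k + 1) * x^(n-k)

lemma hasDerivAt_im' {f : ℝ → ℂ} {f' : ℂ} {x : ℝ} (hf : HasDerivAt f f' x) :
    HasDerivAt (fun y => (f y).im) f'.im x := by
  exact Complex.imCLM.hasFDerivAt.comp_hasDerivAt x hf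

lemma key_hasDerivAt (m : ℕ) (x : ℝ) :
    HasDerivAt (fun y : ℝ => (((y:ℂ) - Complex.I)^(m+1))⁻¹)
      (-(m+1) * (((x:ℂ) - Complex.I)^(m+2))⁻¹) x := by
  have hne : (x:ℂ) - Complex.I ≠ 0 := by
    intro h
    have := congrArg Complex.im h
    simp at this
  have h1 : HasDerivAt (fun z : ℂ => ((z - Complex.I)^(m+1))⁻¹)
      (-(m+1) * (((x:ℂ) - Complex.I)^(m+2))⁻¹) ((x:ℂ)) := by
    have h2 : HasDerivAt (fun z : ℂ => (z - Complex.I)^(m+1))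
        ((m+1) * ((x:ℂ) - Complex.I)^m) ((x:ℂ)) := by
      simpa using ((hasDerivAt_id ((x:ℂ))).sub_const Complex.I).fun_pow (m+1)
    refine (h2.fun_inv (pow_ne_zero _ hne)).congr_deriv (Eq.symm ?_)
    rw [neg_div, neg_mul, neg_inj]
    field_simp
    ring
  exact h1.comp_ofReal

lemma lemA (m : ℕ) (x : ℝ) :
    iteratedDeriv m (fun x : ℝ => (1+x^2)⁻¹) x =
      (-1:ℝ)^m * m.factorial * ((((x:ℂ) - Complex.I)^(m+1))⁻¹).im := by
  induction m generalizing x with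
  | zero =>
    simp only [iteratedDeriv_zero, pow_zero, Nat.factorial_zero, Nat.cast_one, one_mul, pow_one,
      Complex.inv_im, Complex.normSq_apply]
    simp
    ring
  | succ m ih =>
    rw [iteratedDeriv_succ]
    have hrw : iteratedDeriv m (fun x : ℝ => (1+x^2)⁻¹) =
        fun y : ℝ => (-1:ℝ)^m * m.factorial * ((((y:ℂ) - Complex.I)^(m+1))⁻¹).im :=
      funext ih
    rw [hrw]
    have hd := (hasDerivAt_im' (key_hasDerivAt m x)).const_mul ((-1:ℝ)^m * m.factorial)
    rw [hd.deriv]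
    have him : ((-(↑m+1) * (((x:ℂ) - Complex.I)^(m+2))⁻¹).im)
        = -((m:ℝ)+1) * ((((x:ℂ) - Complex.I)^(m+2))⁻¹).im := by
      have : (-((m:ℂ)+1)) = ((-((m:ℝ)+1) : ℝ) : ℂ) := by push_cast; ring
      rw [this, Complex.im_ofReal_mul]
    rw [him, Nat.factorial_succ]
    push_cast
    ring

lemma term_im (r c : ℝ) (j : ℕ) :
    ((r:ℂ) * Complex.I^j * (c:ℂ)).im = r * c * (if Odd j then (-1:ℝ)^(j/2) else 0) := by
  rcases Nat.even_or_odd j with ⟨a, ha⟩ | ⟨a, ha⟩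
  · have : Complex.I ^ j = (((-1:ℝ)^a : ℝ) : ℂ) := by
      rw [ha, ← two_mul, pow_mul, Complex.I_sq]; push_cast; ring
    rw [this]
    have hodd : ¬ Odd j := by simp [ha, ← two_mul, Nat.not_odd_iff_even, even_two_mul]
    simp [hodd, ← Complex.ofReal_pow, ← Complex.ofReal_mul]
  · have : Complex.I ^ j = (((-1:ℝ)^a : ℝ) : ℂ) * Complex.I := by
      rw [ha, pow_succ, pow_mul, Complex.I_sq]; push_cast; ring
    rw [this]
    have hodd : Odd j := ⟨a, ha⟩
    have hj2 : j / 2 = a := by omega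
    simp [hodd, hj2, Complex.mul_im, ← Complex.ofReal_pow, ← Complex.ofReal_mul]
    ring

lemma lemB (m : ℕ) (x : ℝ) :
    (((x:ℂ) + Complex.I)^(m+1)).im = (m+1) * p m x := by
  rw [add_pow, Complex.im_sum]
  have hterm : ∀ k ∈ Finset.range (m+2),
      ((x:ℂ)^k * Complex.I^(m+1-k) * ((m+1).choose k : ℂ)).im
      = x^k * ((m+1).choose k : ℝ) * (if Odd (m+1-k) then (-1:ℝ)^((m+1-k)/2) else 0) := by
    intro k _
    have := term_im (x^k) ((m+1).choose k : ℝ) (m+1-k)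
    push_cast at this ⊢
    exact this
  rw [Finset.sum_congr rfl hterm]
  have hsplit : ∑ k ∈ Finset.range (m+2),
      x^k * ((m+1).choose k : ℝ) * (if Odd (m+1-k) then (-1:ℝ)^((m+1-k)/2) else 0)
      = ∑ k ∈ (Finset.range (m+2)).filter (fun k => Odd (m+1-k)),
        x^k * ((m+1).choose k : ℝ) * (-1:ℝ)^((m+1-k)/2) := by
    rw [Finset.sum_filter]
    exact Finset.sum_congr rfl (fun k _ => by split <;> simp
      )
  rw [hsplit, p, Finset.mul_sum]
  refine (Finset.sum_nbij' (fun k => m - k) (fun k => m - k) ?_ ?_ ?_ ?_ ?_).symm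
  · intro a ha
    simp only [Finset.mem_filter, Finset.mem_range] at ha ⊢
    obtain ⟨h1, h2⟩ := ha
    constructor
    · omega
    · have : m + 1 - (m - a) = a + 1 := by omega
      rw [this]
      exact h2.add_one
  · intro a ha
    simp only [Finset.mem_filter, Finset.mem_range] at ha ⊢
    obtain ⟨h1, h2⟩ := ha
    have hle : a ≤ m := by
      by_contra h
      have : m + 1 - a = 0 := by omega
      rw [this] at h2
      simp at h2
    constructor
    · omega
    · have : m + 1 - a = (m - a) + 1 := by omega
      rw [this] at h2
      rcases Nat.even_or_odd (m - a) with h | h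
      · exact h
      · exact absurd h2 (by simpa using h.add_one)
  · intro a ha
    simp only [Finset.mem_filter, Finset.mem_range] at ha
    show m - (m - a) = a
    omega
  · intro a ha
    simp only [Finset.mem_filter, Finset.mem_range] at ha
    have : a ≤ m := by
      by_contra h
      have : m + 1 - a = 0 := by omega
      rw [this] at ha
      simp at ha
    show m - (m - a) = a
    omega
  · intro a ha
    simp only [Finset.mem_filter, Finset.mem_range] at ha
    obtain ⟨h1, h2⟩ := ha
    have hsub : m + 1 - (m - a) = a + 1 := by omega
    have hch : (m+1).choose (m - a) = (m+1).choose (a+1) := by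
      have : m - a = (m+1) - (a+1) := by omega
      rw [this, Nat.choose_symm (by omega)]
    have hdiv : (a+1)/2 = a/2 := by
      obtain ⟨b, hb⟩ := h2
      omega
    rw [hsub, hch, hdiv]
    have hcoeff : ((m:ℝ)+1) * ((m.choose a : ℝ) * (-1:ℝ)^(a/2) / (a+1))
        = ((m+1).choose (a+1) : ℝ) * (-1:ℝ)^(a/2) := by
      have h := Nat.add_one_mul_choose_eq m a
      have h' : ((m+1) * m.choose a : ℝ) = ((m+1).choose (a+1) * (a+1) : ℝ) := by
        exact_mod_cast congrArg (Nat.cast : ℕ → ℝ) h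
      push_cast at h'
      field_simp
      linear_combination h'
    beta_reduce
    linear_combination (x^(m-a)) * hcoeff

theorem arctan_iteratedDeriv_p (n : ℕ) (hn : 1 ≤ n) (x : ℝ) :
    iteratedDeriv n Real.arctan x =
      (-1 : ℝ)^(n-1) * n.factorial * p (n - 1) x / (1 + x^2)^n := by
  obtain ⟨m, rfl⟩ : ∃ m, n = m + 1 := ⟨n - 1, (Nat.succ_pred_eq_of_pos hn).symm⟩
  rw [iteratedDeriv_succ', Real.deriv_arctan]
  simp only [one_div]
  rw [lemA]
  have hpos : (0:ℝ) < 1 + x^2 := by positivity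
  have key : (((x:ℂ) - Complex.I)^(m+1))⁻¹
      = ((x:ℂ) + Complex.I)^(m+1) / ((((1+x^2)^(m+1) : ℝ)) : ℂ) := by
    have hmul : ((x:ℂ) - Complex.I) * ((x:ℂ) + Complex.I) = (((1+x^2 : ℝ)) : ℂ) := by
      push_cast
      have : Complex.I ^ 2 = -1 := Complex.I_sq
      ring_nf
      rw [this]
      ring
    have hne : ((((1+x^2)^(m+1) : ℝ)) : ℂ) ≠ 0 := by
      simp only [ne_eq, Complex.ofReal_eq_zero]
      positivity
    rw [eq_div_iff hne, inv_mul_eq_div, div_eq_iff (pow_ne_zero _ (by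
      intro h
      have := congrArg Complex.im h
      simp at this))]
    rw [← mul_pow, mul_comm ((x:ℂ) + Complex.I), hmul]
    norm_cast
  rw [key, Complex.div_ofReal_im, lemB]
  rw [Nat.add_sub_cancel, Nat.factorial_succ]
  push_cast
  ring
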